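/- arXiv:2602.15311 — 7 statements merged into one kernel-verified Lean document; each statement's English description precedes it below -/
import Mathlib

section
/- For every string T = T[1..n] and every position j with 1 ≤ j < n, it holds that LPF[j+1] ≥ LPF[j] − 1. -/
variable {α : Type*}

/-- `occursAt T S p`: the string `S` occurs at the 1-based position `p` in `T`,
i.e. `1 ≤ p ≤ |T| − |S| + 1` and `T[p..p+|S|−1] = S`. -/
def occursAt (T S : List α) (p : ℕ) : Prop :=
  1 ≤ p ∧ p + S.length ≤ T.length + 1 ∧ (T.drop (p - 1)).take S.length = S

/-- `#occ_T(S)`: the number of positions at which `S` occurs in `T`. -/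
noncomputable def occCount (T S : List α) : ℕ :=
  {p : ℕ | occursAt T S p}.ncard

/-- `sub T i ℓ = T[i..i+ℓ−1]` (1-based substring of length `ℓ` starting at `i`). -/
def sub (T : List α) (i ℓ : ℕ) : List α := (T.drop (i - 1)).take ℓ

/-- Longest previous factor array (1-based): `LPF T i` is the largest `ℓ ≥ 0` such that
the prefix `T[i..i+ℓ−1]` of `T[i..n]` also occurs at some position `j < i` in `T`. -/
noncomputable def LPF (T : List α) (i : ℕ) : ℕ :=
  @Nat.findGreatest
    (fun ℓ => (i - 1) + ℓ ≤ T.length ∧ ∃ j, 1 ≤ j ∧ j < i ∧ occursAt T (sub T i ℓ) j)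
    (Classical.decPred _) T.length

/-- Longest repeating suffix array (1-based): `LRS T i` is the length of the longest
suffix of `T[1..i]` occurring at least twice in `T[1..i]`. -/
noncomputable def LRS (T : List α) (i : ℕ) : ℕ :=
  @Nat.findGreatest
    (fun ℓ => 2 ≤ occCount (T.take i) ((T.take i).drop (i - ℓ)))
    (Classical.decPred _) i

lemma fg_spec' {P : ℕ → Prop} (inst : DecidablePred P) {n : ℕ}
    (h : @Nat.findGreatest P inst n ≠ 0) : P (@Nat.findGreatest P inst n) :=
  ((@Nat.findGreatest_eq_iff _ n P inst).mp rfl).2.1 h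

lemma fg_le' {P : ℕ → Prop} (inst : DecidablePred P) {m n : ℕ}
    (hmn : m ≤ n) (hm : P m) : m ≤ @Nat.findGreatest P inst n :=
  @Nat.le_findGreatest m P inst n hmn hm

/-- For every string `T = T[1..n]` and every position `j` with `1 ≤ j < n`,
it holds that `LPF[j+1] ≥ LPF[j] − 1` (stated subtraction-free over ℕ). -/
theorem lpf_succ_ge_pred (T : List α) (j : ℕ) (h1 : 1 ≤ j) (h2 : j < T.length) :
    LPF T j ≤ LPF T (j + 1) + 1 := by
  classical
  set ℓ := LPF T j with hℓ
  rcases le_or_gt ℓ 1 with h | h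
  · omega
  · have hpos : 0 < ℓ := by omega
    have hspec := fg_spec' (P := fun ℓ => (j - 1) + ℓ ≤ T.length ∧
        ∃ p, 1 ≤ p ∧ p < j ∧ occursAt T (sub T j ℓ) p) (Classical.decPred _)
        (n := T.length) (show LPF T j ≠ 0 by omega)
    have hspec' : (j - 1) + ℓ ≤ T.length ∧ ∃ p, 1 ≤ p ∧ p < j ∧ occursAt T (sub T j ℓ) p :=
      hspec
    obtain ⟨hlen, p, hp1, hpj, hocc1, hocc2, hocc3⟩ := hspec'
    -- length of sub T j ℓ is ℓ
    have hlsub : (sub T j ℓ).length = ℓ := by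
      simp only [sub, List.length_take, List.length_drop]
      omega
    have hlsub' : (sub T (j + 1) (ℓ - 1)).length = ℓ - 1 := by
      simp only [sub, List.length_take, List.length_drop]
      omega
    -- sub T (j+1) (ℓ-1) = (sub T j ℓ).drop 1
    have hdt : ∀ (m : ℕ) (L : List α), 1 ≤ m → (L.drop (m - 1)).drop 1 = L.drop m := by
      intro m L hm
      rw [List.drop_drop]
      congr 1
      omega
    have heq : sub T (j + 1) (ℓ - 1) = (sub T j ℓ).drop 1 := by
      simp only [sub, Nat.add_sub_cancel, List.drop_take]
      rw [← hdt j T h1]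
    -- occurrence at p+1
    have hocc' : occursAt T (sub T (j + 1) (ℓ - 1)) (p + 1) := by
      refine ⟨by omega, ?_, ?_⟩
      · rw [hlsub']; rw [hlsub] at hocc2; omega
      · rw [hlsub', heq, Nat.add_sub_cancel, ← hdt p T hp1, ← hocc3, hlsub,
          List.drop_take]
    have key : ℓ - 1 ≤ LPF T (j + 1) := by
      exact fg_le' (Classical.decPred _) (by omega)
        ⟨by omega, p + 1, by omega, by omega, hocc'⟩
    omega
end

section
/- Irreducible LPF intervals cannot be nested inside earlier LPF intervals: for every string T = T[1..n] and positions 1 ≤ i < i' ≤ n, if position i' is irreducible (i.e., LPF[i'] ≥ LPF[i'−1]), then i' + LPF[i'] ≥ i + LPF[i] + 1; in particular the interval [i'..i'+LPF[i']−1] is not properly contained in the interval [i..i+LPF[i]−1]. -/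
variable {α : Type*}

def lpfP (T : List α) (i : ℕ) (ℓ : ℕ) : Prop :=
  (i - 1) + ℓ ≤ T.length ∧ ∃ j, 1 ≤ j ∧ j < i ∧ occursAt T (sub T i ℓ) j

lemma lpf_eq (T : List α) (i : ℕ) :
    LPF T i = @Nat.findGreatest (lpfP T i) (Classical.decPred _) T.length := rfl

lemma lpf_spec (T : List α) (k : ℕ) (h : LPF T k ≠ 0) : lpfP T k (LPF T k) := by
  rw [lpf_eq] at h ⊢
  exact @Nat.findGreatest_of_ne_zero _ (lpfP T k) (Classical.decPred _) _ rfl h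

lemma lpf_ge (T : List α) (k m : ℕ) (hm : m ≤ T.length) (h : lpfP T k m) : m ≤ LPF T k := by
  rw [lpf_eq]
  exact @Nat.le_findGreatest m (lpfP T k) (Classical.decPred _) _ hm h

lemma lpf_succ (T : List α) (k : ℕ) (hk : 1 ≤ k) : LPF T k ≤ LPF T (k + 1) + 1 := by
  by_cases hz : LPF T k = 0
  · omega
  obtain ⟨hlen, j, hj1, hjk, hocc⟩ := lpf_spec T k hz
  set ℓ := LPF T k with hℓ
  have hℓ1 : 1 ≤ ℓ := Nat.one_le_iff_ne_zero.mpr hz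
  have hsublen : (sub T k ℓ).length = ℓ := by
    simp [sub, List.length_take, List.length_drop]
    omega
  obtain ⟨_, hjlen, heq⟩ := hocc
  rw [hsublen] at hjlen heq
  have heq' : (T.drop j).take (ℓ - 1) = (T.drop k).take (ℓ - 1) := by
    have := congrArg (List.drop 1) heq
    simpa [sub, List.drop_take, List.drop_drop, Nat.sub_add_cancel hj1,
      Nat.sub_add_cancel hk, Nat.add_comm] using this
  have hsublen' : (sub T (k + 1) (ℓ - 1)).length = ℓ - 1 := by
    simp [sub, List.length_take, List.length_drop]
    omega
  have hocc' : occursAt T (sub T (k + 1) (ℓ - 1)) (j + 1) := by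
    refine ⟨by omega, ?_, ?_⟩
    · rw [hsublen']; omega
    · rw [hsublen']
      simpa [sub] using heq'
  have hP : lpfP T (k + 1) (ℓ - 1) := ⟨by omega, j + 1, by omega, by omega, hocc'⟩
  have hle : ℓ - 1 ≤ LPF T (k + 1) := lpf_ge T (k + 1) (ℓ - 1) (by omega) hP
  omega

lemma lpf_mono (T : List α) (i : ℕ) (hi : 1 ≤ i) :
    ∀ d, i + LPF T i ≤ (i + d) + LPF T (i + d) := by
  intro d
  induction d with
  | zero => simp
  | succ d ih =>
    have h1 := lpf_succ T (i + d) (by omega)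
    have harg : i + (d + 1) = (i + d) + 1 := by omega
    rw [harg]
    omega

/-- irreducible LPF intervals cannot be nested inside earlier LPF intervals:
for `1 ≤ i < i' ≤ n`, if `i'` is irreducible (`LPF[i'] ≥ LPF[i'−1]`), then
`i' + LPF[i'] ≥ i + LPF[i] + 1`. -/
theorem irreducible_lpf_not_nested (T : List α) (i i' : ℕ)
    (h1 : 1 ≤ i) (h2 : i < i') (h3 : i' ≤ T.length)
    (hirr : LPF T (i' - 1) ≤ LPF T i') :
    i + LPF T i + 1 ≤ i' + LPF T i' := by
  have hd : i' - 1 = i + (i' - 1 - i) := by omega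
  have hm := lpf_mono T i h1 (i' - 1 - i)
  rw [← hd] at hm
  omega
end

section
/- Correctness of the LRS-to-LPF conversion rule: for every string T = T[1..n] and every i with 2 ≤ i ≤ n such that LRS[i] ≤ LRS[i−1], every position j with i − LRS[i−1] ≤ j ≤ i − LRS[i] satisfies LPF[j] = i − j. -/
variable {α : Type*}

lemma occ_finite (U S : List α) : {p : ℕ | occursAt U S p}.Finite :=
  (Set.finite_Iic (U.length + 1)).subset
    (fun p hp => le_trans (Nat.le_add_right p S.length) hp.2.1)

lemma two_le_occCount {U S : List α} {a b : ℕ} (ha : occursAt U S a)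
    (hb : occursAt U S b) (hab : a ≠ b) : 2 ≤ occCount U S := by
  have := (Set.one_lt_ncard_iff (occ_finite U S)).mpr ⟨a, b, ha, hb, hab⟩
  unfold occCount
  omega

lemma exists_pair_of_two_le_occCount {U S : List α} (h : 2 ≤ occCount U S) :
    ∃ a b, occursAt U S a ∧ occursAt U S b ∧ a ≠ b := by
  have h1 : 1 < ({p : ℕ | occursAt U S p}).ncard := by unfold occCount at h; omega
  exact (Set.one_lt_ncard_iff (occ_finite U S)).mp h1

lemma occursAt_take_iff {T S : List α} {i p : ℕ} (hi : i ≤ T.length) :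
    occursAt (T.take i) S p ↔ occursAt T S p ∧ p + S.length ≤ i + 1 := by
  unfold occursAt
  have hlen : (T.take i).length = i := by rw [List.length_take]; omega
  rw [hlen, List.drop_take, List.take_take]
  constructor
  · rintro ⟨h1, h2, h3⟩
    rw [min_eq_left (by omega)] at h3
    exact ⟨⟨h1, by omega, h3⟩, h2⟩
  · rintro ⟨⟨h1, _h2, h3⟩, h4⟩
    rw [min_eq_left (by omega)]
    exact ⟨h1, h4, h3⟩

lemma occursAt_drop {T S : List α} {p : ℕ} (h : occursAt T S p) (d : ℕ)
    (hd : d ≤ S.length) : occursAt T (S.drop d) (p + d) := by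
  obtain ⟨h1, h2, h3⟩ := h
  refine ⟨by omega, by rw [List.length_drop]; omega, ?_⟩
  conv_rhs => rw [← h3]
  rw [List.drop_take, List.drop_drop, List.length_drop]
  have hpd : p + d - 1 = p - 1 + d := by omega
  rw [hpd]

lemma occursAt_take_pref {T S : List α} {p : ℕ} (h : occursAt T S p) (m : ℕ) :
    occursAt T (S.take m) p := by
  obtain ⟨h1, h2, h3⟩ := h
  refine ⟨h1, by rw [List.length_take]; omega, ?_⟩
  rw [List.length_take]
  have : S.take m = ((T.drop (p - 1)).take S.length).take m := by rw [h3]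
  rw [this, List.take_take]

lemma occursAt_suffix_self (U : List α) {d : ℕ} (hd : d ≤ U.length) :
    occursAt U (U.drop d) (d + 1) := by
  refine ⟨by omega, by rw [List.length_drop]; omega, ?_⟩
  simp

lemma findGreatest_eq_iff' (P : ℕ → Prop) {m k : ℕ} :
    @Nat.findGreatest P (Classical.decPred P) k = m ↔
      m ≤ k ∧ (m ≠ 0 → P m) ∧ ∀ ⦃n : ℕ⦄, m < n → n ≤ k → ¬P n :=
  @Nat.findGreatest_eq_iff m k P (Classical.decPred P)

lemma le_findGreatest' (P : ℕ → Prop) {m n : ℕ} (h : m ≤ n) (hP : P m) :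
    m ≤ @Nat.findGreatest P (Classical.decPred P) n :=
  @Nat.le_findGreatest m P (Classical.decPred P) n h hP

lemma findGreatest_le' (P : ℕ → Prop) (n : ℕ) :
    @Nat.findGreatest P (Classical.decPred P) n ≤ n :=
  @Nat.findGreatest_le P (Classical.decPred P) n

/-- correctness of the LRS-to-LPF conversion rule: for every `i` with
`2 ≤ i ≤ n` such that `LRS[i] ≤ LRS[i−1]`, every position `j` with
`i − LRS[i−1] ≤ j ≤ i − LRS[i]` satisfies `LPF[j] = i − j`. -/
theorem lrs_to_lpf_rule (T : List α) (i : ℕ) (h1 : 2 ≤ i) (h2 : i ≤ T.length)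
    (h : LRS T i ≤ LRS T (i - 1)) :
    ∀ j, i - LRS T (i - 1) ≤ j → j ≤ i - LRS T i → LPF T j = i - j := by
  intro j hj1 hj2
  obtain ⟨r, hrdef⟩ : ∃ r, LRS T (i - 1) = r := ⟨_, rfl⟩
  obtain ⟨s, hsdef⟩ : ∃ s, LRS T i = s := ⟨_, rfl⟩
  rw [hrdef] at h hj1
  rw [hsdef] at h hj2
  have hrle : r ≤ i - 1 := by rw [← hrdef]; exact findGreatest_le' _ _
  have hsle : s ≤ i := by rw [← hsdef]; exact findGreatest_le' _ _
  have hj_ge1 : 1 ≤ j := by omega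
  have hjle : j ≤ i := by omega
  have hij_r : i - j ≤ r := by omega
  have hs_ij : s ≤ i - j := by omega
  -- unfold LPF as findGreatest_eq_iff
  show @Nat.findGreatest
      (fun ℓ => (j - 1) + ℓ ≤ T.length ∧ ∃ k, 1 ≤ k ∧ k < j ∧ occursAt T (sub T j ℓ) k)
      (Classical.decPred _) T.length = i - j
  rw [findGreatest_eq_iff'
    (fun ℓ => (j - 1) + ℓ ≤ T.length ∧ ∃ k, 1 ≤ k ∧ k < j ∧ occursAt T (sub T j ℓ) k)]
  refine ⟨by omega, ?_, ?_⟩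
  · -- existence: P (i - j) when i - j ≠ 0
    intro hne
    have hij1 : 1 ≤ i - j := by omega
    have hr1 : 1 ≤ r := by omega
    -- LRS (i-1) = r > 0 gives the property at r
    have hQr : 2 ≤ occCount (T.take (i-1)) ((T.take (i-1)).drop ((i-1) - r)) := by
      have := (findGreatest_eq_iff'
        (fun ℓ => 2 ≤ occCount (T.take (i-1)) ((T.take (i-1)).drop ((i-1) - ℓ)))).mp hrdef
      exact this.2.1 (by omega)
    obtain ⟨S1, hS1⟩ : ∃ S1 : List α, (T.take (i-1)).drop ((i-1) - r) = S1 := ⟨_, rfl⟩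
    rw [hS1] at hQr
    have hS1len : S1.length = r := by
      rw [← hS1, List.length_drop, List.length_take]; omega
    obtain ⟨a, b, ha, hb, hab⟩ := exists_pair_of_two_le_occCount hQr
    -- both occurrences are ≤ i - r ; take the smaller one, it is < i - r
    have ha2 := ha.2.1
    have hb2 := hb.2.1
    rw [hS1len, List.length_take] at ha2 hb2
    obtain ⟨p, hpS1, hplt⟩ : ∃ p, occursAt (T.take (i-1)) S1 p ∧ p < i - r := by
      rcases Nat.lt_or_ge a b with hlt | hge
      · exact ⟨a, ha, by omega⟩
      · rcases Nat.lt_or_ge b a with hlt' | hge'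
        · exact ⟨b, hb, by omega⟩
        · omega
    have hpT : occursAt T S1 p := ((occursAt_take_iff (by omega)).mp hpS1).1
    -- S1 as a sub of T
    have hS1eq : S1 = (T.drop ((i-1) - r)).take r := by
      rw [← hS1, List.drop_take]; congr 1; omega
    have hdle : j - (i - r) ≤ S1.length := by rw [hS1len]; omega
    have hocc := occursAt_drop hpT (j - (i - r)) hdle
    have hsubeq : S1.drop (j - (i - r)) = sub T j (i - j) := by
      rw [hS1eq, List.drop_take, List.drop_drop]
      unfold sub
      have e1 : r - (j - (i - r)) = i - j := by omega
      have e2 : (i - 1) - r + (j - (i - r)) = j - 1 := by omega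
      rw [e1, e2]
    rw [hsubeq] at hocc
    have hp1 : 1 ≤ p := hpS1.1
    refine ⟨by omega, p + (j - (i - r)), by omega, by omega, hocc⟩
  · -- maximality: no m > i - j works
    intro m hm1 hm2 hPm
    obtain ⟨hlen, k, hk1, hk2, hocc⟩ := hPm
    have hm3 : i - j + 1 ≤ m := by omega
    have hocc1 : occursAt T (sub T j (i - j + 1)) k := by
      have := occursAt_take_pref hocc (i - j + 1)
      have heq : (sub T j m).take (i - j + 1) = sub T j (i - j + 1) := by
        unfold sub
        rw [List.take_take, min_eq_left hm3]
      rwa [heq] at this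
    have hsublen : (sub T j (i - j + 1)).length = (i - j + 1) := by
      unfold sub
      rw [List.length_take, List.length_drop]; omega
    -- both k and j are occurrences in T.take i
    have hkocc : occursAt (T.take i) (sub T j (i - j + 1)) k := by
      rw [occursAt_take_iff h2]
      exact ⟨hocc1, by rw [hsublen]; omega⟩
    have hsubdrop : sub T j (i - j + 1) = (T.take i).drop (i - (i - j + 1)) := by
      rw [List.drop_take]
      unfold sub
      have e1 : i - (i - (i - j + 1)) = i - j + 1 := by omega
      have e2 : i - (i - j + 1) = j - 1 := by omega
      rw [e1, e2]
    have hjocc : occursAt (T.take i) (sub T j (i - j + 1)) j := by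
      rw [hsubdrop]
      have := occursAt_suffix_self (T.take i) (d := i - (i - j + 1))
        (by rw [List.length_take]; omega)
      have hji : i - (i - j + 1) + 1 = j := by omega
      rwa [hji] at this
    have h2occ : 2 ≤ occCount (T.take i) ((T.take i).drop (i - (i - j + 1))) := by
      rw [hsubdrop] at hkocc hjocc
      exact two_le_occCount hkocc hjocc (by omega)
    have : (i - j + 1) ≤ s := by
      rw [← hsdef]
      exact le_findGreatest'
        (fun ℓ => 2 ≤ occCount (T.take i) ((T.take i).drop (i - ℓ))) (by omega) h2occ
    omega
end

section
/- Correctness of the final step of the LRS-to-LPF conversion: for every string T = T[1..n] and every position j with n − LRS[n] + 1 ≤ j ≤ n, it holds that LPF[j] = n − j + 1. -/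
variable {α : Type*}

/-- The value of `Nat.findGreatest` does not depend on the decidability instance. -/
lemma findGreatest_irrel (P : ℕ → Prop) (i₁ i₂ : DecidablePred P) (n : ℕ) :
    @Nat.findGreatest P i₁ n = @Nat.findGreatest P i₂ n := by
  congr!

/-- correctness of the final step of the LRS-to-LPF conversion: for every
position `j` with `n − LRS[n] + 1 ≤ j ≤ n`, it holds that `LPF[j] = n − j + 1`. -/
theorem lrs_to_lpf_final (T : List α) (hn : 1 ≤ T.length) (j : ℕ)
    (h1 : T.length - LRS T T.length + 1 ≤ j) (h2 : j ≤ T.length) :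
    LPF T j = T.length - j + 1 := by
  classical
  set n := T.length with hnT
  set L := LRS T n with hLdef
  have hLRS : L = Nat.findGreatest
      (fun ℓ => 2 ≤ occCount (T.take n) ((T.take n).drop (n - ℓ))) n :=
    hLdef.trans (findGreatest_irrel _ _ _ n)
  have hLn : L ≤ n := hLRS ▸ Nat.findGreatest_le n
  have hL1 : 1 ≤ L := by omega
  -- the LRS predicate holds at L
  have hspec : 2 ≤ occCount (T.take n) ((T.take n).drop (n - L)) :=
    (Nat.findGreatest_eq_iff.1 hLRS.symm).2.1 (by omega)
  rw [show T.take n = T from List.take_length] at hspec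
  set S : List α := T.drop (n - L) with hS
  have hSlen : S.length = L := by
    rw [hS, List.length_drop]; omega
  -- a second occurrence, necessarily at p < n - L + 1
  obtain ⟨p, hpmem, hpne⟩ :=
    Set.exists_ne_of_one_lt_ncard (by exact_mod_cast hspec : 1 < occCount T S) (n - L + 1)
  obtain ⟨hp1, hp2, hp3⟩ := hpmem
  rw [hSlen] at hp2
  have hplt : p < n - L + 1 := by omega
  -- shift: occurrence of T[j..n] at position q = p + (j - (n - L + 1)) < j
  set m := n - j + 1 with hm
  set d := j - (n - L + 1) with hd
  set q := p + d with hq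
  have hq1 : 1 ≤ q := by omega
  have hqj : q < j := by omega
  -- the key list equality
  have hkey : (T.drop (q - 1)).take m = T.drop (j - 1) := by
    have h0 : (T.drop (p - 1)).take L = S := by
      rw [← hSlen]; exact hp3
    have h0' := congrArg (List.drop d) h0
    rw [hS, List.drop_take, List.drop_drop, List.drop_drop] at h0'
    have e1 : p - 1 + d = q - 1 := by omega
    have e2 : L - d = m := by omega
    have e3 : n - L + d = j - 1 := by omega
    rw [e1, e2, e3] at h0'
    exact h0'
  have hdropj_len : (T.drop (j - 1)).length = m := by
    rw [List.length_drop]; omega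
  have hsub : sub T j m = T.drop (j - 1) := by
    rw [sub, List.take_of_length_le (by rw [hdropj_len])]
  have hsublen : (sub T j m).length = m := by rw [hsub, hdropj_len]
  -- occurrence of sub T j m at q
  have hocc : occursAt T (sub T j m) q := by
    refine ⟨hq1, ?_, ?_⟩
    · rw [hsublen]; omega
    · rw [hsublen, hsub, hkey]
  -- conclude via findGreatest_eq_iff
  have hLPF : LPF T j = Nat.findGreatest
      (fun ℓ => (j - 1) + ℓ ≤ T.length ∧ ∃ i, 1 ≤ i ∧ i < j ∧ occursAt T (sub T j ℓ) i) n :=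
    findGreatest_irrel _ _ _ n
  rw [hLPF, Nat.findGreatest_eq_iff]
  refine ⟨by omega, fun _ => ⟨by omega, q, hq1, hqj, hocc⟩, ?_⟩
  rintro k hk hk' ⟨hle, -⟩
  omega
end

section
/- Existence criterion for the shortest suffix with exactly two occurrences: let W be a string of length n ≥ 2 and let L be the longest repeating suffix of W (the longest suffix of W occurring at least twice in W; possibly empty). Then there exists a nonempty suffix S of W with #occ_W(S) = 2 if and only if L is nonempty and #occ_W(L) = 2. -/
variable {α : Type*}

/-- existence criterion for the shortest suffix with exactly two
occurrences: for `|W| = n ≥ 2` with longest repeating suffix `L` (of length `LRS[n]`),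
there exists a nonempty suffix `S` of `W` with `#occ_W(S) = 2` if and only if `L` is
nonempty and `#occ_W(L) = 2`. -/
theorem exists_twice_suffix_iff (W : List α) (hn : 2 ≤ W.length) :
    (∃ ℓ, 1 ≤ ℓ ∧ ℓ ≤ W.length ∧ occCount W (W.drop (W.length - ℓ)) = 2) ↔
    (1 ≤ LRS W W.length ∧
      occCount W (W.drop (W.length - LRS W W.length)) = 2) := by
  classical
  have hfin : ∀ S : List α, {p : ℕ | occursAt W S p}.Finite := fun S =>
    (Set.finite_Icc 1 (W.length + 1)).subset fun p hp =>
      ⟨hp.1, le_trans (Nat.le_add_right _ _) hp.2.1⟩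
  -- occurrences of a longer string inject into occurrences of a suffix of it
  have hmono : ∀ S : List α, ∀ d, d ≤ S.length →
      occCount W S ≤ occCount W (S.drop d) := by
    intro S d hd
    have hstep : ∀ p, occursAt W S p → occursAt W (S.drop d) (p + d) := by
      rintro p ⟨h1, h2, h3⟩
      refine ⟨by omega, ?_, ?_⟩
      · simp only [List.length_drop]; omega
      · have := congrArg (List.drop d) h3
        rw [List.drop_take, List.drop_drop,
          show p - 1 + d = p + d - 1 from by omega] at this
        rw [List.length_drop]
        exact this
    have hinj : Set.InjOn (fun p => p + d) {p : ℕ | occursAt W S p} := by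
      intro a _ b _ h
      simpa using h
    unfold occCount
    exact Set.ncard_le_ncard_of_injOn (fun p => p + d)
      (fun p hp => hstep p hp) hinj (hfin _)
  set P : ℕ → Prop :=
    fun ℓ => 2 ≤ occCount (W.take W.length) ((W.take W.length).drop (W.length - ℓ)) with hPdef
  have hP : ∀ ℓ : ℕ, P ℓ ↔ 2 ≤ occCount W (W.drop (W.length - ℓ)) := by
    intro ℓ; rw [hPdef]; rw [List.take_length]
  have hLRS : LRS W W.length = Nat.findGreatest P W.length := by
    unfold LRS
    congr 1
  constructor
  · rintro ⟨ℓ, h1, h2, h3⟩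
    have hℓL : ℓ ≤ LRS W W.length := by
      rw [hLRS]
      exact Nat.le_findGreatest h2 ((hP ℓ).2 (by omega))
    have hL1 : 1 ≤ LRS W W.length := le_trans h1 hℓL
    have hLn : LRS W W.length ≤ W.length := by
      rw [hLRS]; exact Nat.findGreatest_le _
    set L := LRS W W.length with hLdef
    have hspec : 2 ≤ occCount W (W.drop (W.length - L)) := by
      have := Nat.findGreatest_spec (P := P) h2 ((hP ℓ).2 (by omega))
      rw [← hLRS] at this
      exact (hP L).1 this
    refine ⟨hL1, le_antisymm ?_ hspec⟩
    have hdrop : (W.drop (W.length - L)).drop (L - ℓ) = W.drop (W.length - ℓ) := by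
      rw [List.drop_drop]
      congr 1
      omega
    have hlen : L - ℓ ≤ (W.drop (W.length - L)).length := by
      simp only [List.length_drop]; omega
    have := hmono (W.drop (W.length - L)) (L - ℓ) hlen
    rw [hdrop] at this
    omega
  · rintro ⟨h1, h2⟩
    refine ⟨LRS W W.length, h1, ?_, h2⟩
    rw [hLRS]
    exact Nat.findGreatest_le _
end

section
/- Deletion of a MUS when a suffix acquires a second occurrence: let W = W[1..n] with n ≥ 2, and suppose S is the shortest suffix of W with #occ_W(S) = 2, and let its non-suffix occurrence be W[s..q] = S with q ≤ n − 1. Then the interval [s..q] belongs to MUS(W[1..n−1]) but does not belong to MUS(W). -/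
variable {α : Type*}

/-- `MUS T`: the set of (1-based) intervals `[s..t] ⊆ [1..n]` such that `T[s..t]` is
unique in `T` while `T[s+1..t]` and `T[s..t−1]` are repeating in `T`. -/
def MUS (T : List α) : Set (ℕ × ℕ) :=
  {st | 1 ≤ st.1 ∧ st.1 ≤ st.2 ∧ st.2 ≤ T.length ∧
    occCount T (sub T st.1 (st.2 - st.1 + 1)) = 1 ∧
    2 ≤ occCount T (sub T (st.1 + 1) (st.2 - st.1)) ∧
    2 ≤ occCount T (sub T st.1 (st.2 - st.1))}

lemma occSet_finite (T S : List α) : {p : ℕ | occursAt T S p}.Finite := by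
  apply Set.Finite.subset (Set.finite_Icc 1 (T.length + 1))
  rintro p ⟨h1, h2, -⟩
  exact ⟨h1, by omega⟩

lemma occursAt_take {W S : List α} {k p : ℕ} (hk : k ≤ W.length) :
    occursAt (W.take k) S p ↔ occursAt W S p ∧ p + S.length ≤ k + 1 := by
  constructor
  · rintro ⟨h1, h2, h3⟩
    rw [List.length_take, min_eq_left hk] at h2
    rw [List.drop_take, List.take_take, min_eq_left (by omega)] at h3
    exact ⟨⟨h1, by omega, h3⟩, h2⟩
  · rintro ⟨⟨h1, h2, h3⟩, h4⟩
    refine ⟨h1, ?_, ?_⟩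
    · rw [List.length_take]; omega
    · rw [List.drop_take, List.take_take, min_eq_left (by omega)]; exact h3

lemma two_le_occCount_s13 {T S : List α} {p q : ℕ} (hpq : p ≠ q)
    (hp : occursAt T S p) (hq : occursAt T S q) : 2 ≤ occCount T S := by
  have h : {p, q} ⊆ {r : ℕ | occursAt T S r} := by
    rintro r (rfl | rfl)
    exacts [hp, hq]
  calc 2 = ({p, q} : Set ℕ).ncard := (Set.ncard_pair hpq).symm
    _ ≤ _ := Set.ncard_le_ncard h (occSet_finite T S)

/-- deletion of a MUS when a suffix acquires a second occurrence: if `S`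
(of length `m ≥ 1`) is the shortest suffix of `W = W[1..n]` with `#occ_W(S) = 2` and its
non-suffix occurrence is `W[s..q] = S` with `q = s + m − 1 ≤ n − 1`, then `[s..q]`
belongs to `MUS(W[1..n−1])` but not to `MUS(W)`. -/
theorem mus_deleted (W : List α) (hn : 2 ≤ W.length) (m s : ℕ)
    (hm : 1 ≤ m) (hmn : m ≤ W.length)
    (h2 : occCount W (W.drop (W.length - m)) = 2)
    (hshort : ∀ m', 1 ≤ m' → m' < m → occCount W (W.drop (W.length - m')) ≠ 2)
    (hocc : occursAt W (W.drop (W.length - m)) s)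
    (hq : s + m ≤ W.length) :
    (s, s + m - 1) ∈ MUS (W.take (W.length - 1)) ∧ (s, s + m - 1) ∉ MUS W := by
  have hn1 : W.length - 1 ≤ W.length := by omega
  set n := W.length with hndef
  set S := W.drop (n - m) with hS
  have hSlen : S.length = m := by rw [hS, List.length_drop]; omega
  obtain ⟨hs1, hs2, hs3⟩ := hocc
  rw [hSlen] at hs2 hs3
  -- hs3 : (W.drop (s-1)).take m = S
  have hdropS : (W.drop (n - m)).take m = S := by
    rw [← hS]
    exact List.take_of_length_le hSlen.le
  have hsuf : occursAt W S (n - m + 1) := by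
    refine ⟨by omega, by rw [hSlen]; omega, ?_⟩
    have h1 : n - m + 1 - 1 = n - m := by omega
    rw [h1, hSlen, hdropS]
  have hne : s ≠ n - m + 1 := by omega
  have hset : {p : ℕ | occursAt W S p} = {s, n - m + 1} := by
    symm
    apply Set.eq_of_subset_of_ncard_le
    · rintro p (rfl | rfl)
      · exact ⟨hs1, by rw [hSlen]; omega, by rw [hSlen]; exact hs3⟩
      · exact hsuf
    · have : occCount W S = 2 := h2
      rw [occCount] at this
      rw [this, Set.ncard_pair hne]
    · exact occSet_finite W S
  -- occurrences of S in W' = W.take (n-1)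
  have hsetW' : {p : ℕ | occursAt (W.take (n - 1)) S p} = {s} := by
    ext p
    rw [Set.mem_setOf_eq, occursAt_take hn1, hSlen]
    constructor
    · rintro ⟨hp, hple⟩
      have hmem : p ∈ {r : ℕ | occursAt W S r} := hp
      rw [hset] at hmem
      rcases hmem with rfl | rfl
      · rfl
      · omega
    · rintro rfl
      exact ⟨⟨hs1, by rw [hSlen]; omega, by rw [hSlen]; exact hs3⟩, by omega⟩
  have hidx1 : s + m - 1 - s + 1 = m := by omega
  have hidx2 : s + m - 1 - s = m - 1 := by omega
  -- substring computations in W' := W.take (n-1)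
  have hsub_take : ∀ i ℓ : ℕ, i - 1 + ℓ ≤ n - 1 → sub (W.take (n - 1)) i ℓ = sub W i ℓ := by
    intro i ℓ h
    unfold sub
    rw [List.drop_take, List.take_take, min_eq_left (by omega)]
  have hsubm : sub (W.take (n - 1)) s m = S := by
    rw [hsub_take s m (by omega)]
    unfold sub
    exact hs3
  have hsubWsm : sub W s m = S := hs3
  have htakeS : sub (W.take (n - 1)) s (m - 1) = S.take (m - 1) := by
    rw [hsub_take s (m - 1) (by omega)]
    unfold sub
    rw [← hs3, List.take_take, min_eq_left (by omega)]
  have hdropS1 : sub (W.take (n - 1)) (s + 1) (m - 1) = S.drop 1 := by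
    rw [hsub_take (s + 1) (m - 1) (by omega)]
    unfold sub
    have h1 : s + 1 - 1 = s - 1 + 1 := by omega
    rw [← hs3, List.drop_take, List.drop_drop, h1]
  have hS1eq : S.drop 1 = W.drop (n - (m - 1)) := by
    rw [hS, List.drop_drop]
    congr 1
    omega
  -- length facts
  have hlenTake : (S.take (m - 1)).length = m - 1 := by
    rw [List.length_take, hSlen]; omega
  have hlenDrop : (S.drop 1).length = m - 1 := by
    rw [List.length_drop, hSlen]
  -- occurrences of S.take (m-1) in W' at s and n-m+1
  have hoccT1 : occursAt (W.take (n - 1)) (S.take (m - 1)) s := by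
    rw [occursAt_take hn1, hlenTake]
    refine ⟨⟨hs1, by rw [hlenTake]; omega, ?_⟩, by omega⟩
    rw [hlenTake, ← hs3, List.take_take, min_eq_left (by omega)]
  have hoccT2 : occursAt (W.take (n - 1)) (S.take (m - 1)) (n - m + 1) := by
    rw [occursAt_take hn1, hlenTake]
    refine ⟨⟨by omega, by rw [hlenTake]; omega, ?_⟩, by omega⟩
    have h1 : n - m + 1 - 1 = n - m := by omega
    rw [hlenTake, h1, ← hS]
  have hcountT : 2 ≤ occCount (W.take (n - 1)) (S.take (m - 1)) :=
    two_le_occCount_s13 hne hoccT1 hoccT2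
  -- occurrences of S.drop 1 in W'
  have hoccD1W : occursAt W (S.drop 1) (s + 1) := by
    refine ⟨by omega, by rw [hlenDrop]; omega, ?_⟩
    have h1 : s + 1 - 1 = s - 1 + 1 := by omega
    rw [hlenDrop, ← hs3, List.drop_take, List.drop_drop, h1]
  have hcountD : 2 ≤ occCount (W.take (n - 1)) (S.drop 1) := by
    rcases eq_or_lt_of_le hm with hm1 | hm2
    · -- m = 1 : S.drop 1 = [] occurs everywhere
      have hSnil : S.drop 1 = [] := by
        apply List.eq_nil_of_length_eq_zero
        rw [hlenDrop]; omega
      have ho1 : occursAt (W.take (n - 1)) (S.drop 1) 1 := by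
        rw [hSnil]
        exact ⟨le_refl 1,
          by simp only [List.length_nil, List.length_take]; omega, by simp⟩
      have ho2 : occursAt (W.take (n - 1)) (S.drop 1) 2 := by
        rw [hSnil]
        exact ⟨by omega,
          by simp only [List.length_nil, List.length_take]; omega, by simp⟩
      exact two_le_occCount_s13 (by omega) ho1 ho2
    · -- m ≥ 2 : use hshort
      have hm2' : 2 ≤ m := hm2
      have hoccD2W : occursAt W (S.drop 1) (n - m + 2) := by
        refine ⟨by omega, by rw [hlenDrop]; omega, ?_⟩
        have h1 : n - m + 2 - 1 = n - (m - 1) := by omega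
        rw [hlenDrop, hS1eq, h1]
        exact List.take_of_length_le (by rw [List.length_drop]; omega)
      have hA3 : 3 ≤ ({p : ℕ | occursAt W (S.drop 1) p}).ncard := by
        have h2le : 2 ≤ occCount W (S.drop 1) :=
          two_le_occCount_s13 (by omega) hoccD1W hoccD2W
        have hne2 : occCount W (S.drop 1) ≠ 2 := by
          rw [hS1eq]
          exact hshort (m - 1) (by omega) (by omega)
        rw [occCount] at h2le hne2
        omega
      set A := {p : ℕ | occursAt W (S.drop 1) p} with hA
      have hsub : A \ {n - m + 2} ⊆ {p : ℕ | occursAt (W.take (n - 1)) (S.drop 1) p} := by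
        rintro p ⟨hpA, hpne⟩
        have hpA' : occursAt W (S.drop 1) p := hpA
        rw [Set.mem_setOf_eq, occursAt_take hn1]
        refine ⟨hpA', ?_⟩
        obtain ⟨hp1, hp2, -⟩ := hpA'
        rw [hlenDrop] at hp2 ⊢
        simp only [Set.mem_singleton_iff] at hpne
        omega
      have hdiff : 2 ≤ (A \ {n - m + 2}).ncard := by
        by_cases hmem : (n - m + 2) ∈ A
        · have := Set.ncard_diff_singleton_add_one hmem (occSet_finite W (S.drop 1))
          omega
        · rw [Set.diff_singleton_eq_self hmem]
          omega
      calc 2 ≤ (A \ {n - m + 2}).ncard := hdiff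
        _ ≤ _ := Set.ncard_le_ncard hsub (occSet_finite _ _)
  constructor
  · refine ⟨hs1, by omega, ?_, ?_, ?_, ?_⟩
    · rw [List.length_take]; omega
    · rw [hidx1, hsubm, occCount, hsetW', Set.ncard_singleton]
    · rw [hidx2, hdropS1]; exact hcountD
    · rw [hidx2, htakeS]; exact hcountT
  · intro hmem
    obtain ⟨-, -, -, h1, -, -⟩ := hmem
    rw [hidx1, hsubWsm] at h1
    rw [h2] at h1
    omega
end

section
/- Characterization of self-overlapping reversed factors via palindromic suffixes: let W = W[1..n] be a string and F its suffix of length m with 1 ≤ m ≤ n. Then there exists an occurrence of the reversed string rev(F) in W that overlaps the suffix occurrence of F — i.e., a position p with 1 ≤ p ≤ n − m + 1, W[p..p+m−1] = rev(F), and p + m − 1 ≥ n − m + 1 — if and only if W has a palindromic suffix of length L for some L with m ≤ L ≤ 2m − 1, i.e., W[n−L+1..n] is a palindrome. -/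
variable {α : Type*}

private lemma revdrop_getElem? (W : List α) (k i : ℕ) (hk : k ≤ W.length) (hi : i < k) :
    (W.drop (W.length - k)).reverse[i]? = W[W.length - 1 - i]? := by
  have hlen : (W.drop (W.length - k)).length = k := by simp; omega
  rw [List.getElem?_reverse (by omega), List.getElem?_drop]
  congr 1
  omega

/-- characterization of self-overlapping reversed factors via palindromic
suffixes: let `F` be the suffix of `W = W[1..n]` of length `m` (`1 ≤ m ≤ n`). There is
an occurrence of `rev(F)` in `W` at a position `p` with `p + m − 1 ≥ n − m + 1` (i.e.
overlapping the suffix occurrence of `F`) if and only if `W` has a palindromic suffix of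
length `L` for some `m ≤ L ≤ 2m − 1`. -/
theorem overlapping_reversed_iff_palindromic_suffix (W : List α) (m : ℕ)
    (hm : 1 ≤ m) (hmn : m ≤ W.length) :
    (∃ p, occursAt W (W.drop (W.length - m)).reverse p ∧
      W.length - m + 1 ≤ p + m - 1) ↔
    (∃ L, m ≤ L ∧ L ≤ 2 * m - 1 ∧ L ≤ W.length ∧
      (W.drop (W.length - L)).reverse = W.drop (W.length - L)) := by
  set n := W.length with hn
  have hlenF : (W.drop (n - m)).reverse.length = m := by simp; omega
  constructor
  · rintro ⟨p, ⟨hp1, hp2, hp3⟩, hov⟩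
    rw [hlenF] at hp2
    refine ⟨n - p + 1, by omega, by omega, by omega, ?_⟩
    -- key pointwise fact from hp3
    have key : ∀ i < m, W[p - 1 + i]? = W[n - 1 - i]? := by
      intro i hi
      have := congrArg (fun l => l[i]?) hp3
      simp only [List.getElem?_take, List.getElem?_drop, hlenF, if_pos hi] at this
      rw [this, revdrop_getElem? W m i hmn hi]
    set L := n - p + 1 with hL
    have hnL : n - L = p - 1 := by omega
    apply List.ext_getElem?
    intro j
    by_cases hj : j < L
    · rw [revdrop_getElem? W L j (by omega) hj, List.getElem?_drop, hnL]
      by_cases hjm : j < m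
      · exact (key j hjm).symm
      · have hj' : L - 1 - j < m := by omega
        have := key (L - 1 - j) hj'
        have e1 : p - 1 + (L - 1 - j) = n - 1 - j := by omega
        have e2 : n - 1 - (L - 1 - j) = p - 1 + j := by omega
        rw [e1, e2] at this
        exact this
    · rw [List.getElem?_eq_none (by simp; omega), List.getElem?_eq_none (by simp; omega)]
  · rintro ⟨L, hLm, hL2, hLn, hP⟩
    refine ⟨n - L + 1, ⟨by omega, by rw [hlenF]; omega, ?_⟩, by omega⟩
    rw [hlenF]
    have key : ∀ i < L, W[n - L + i]? = W[n - 1 - i]? := by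
      intro i hi
      have := congrArg (fun l => l[i]?) hP
      simp only [List.getElem?_drop] at this
      rw [← this, revdrop_getElem? W L i hLn hi]
    apply List.ext_getElem?
    intro i
    by_cases hi : i < m
    · rw [List.getElem?_take, if_pos hi, List.getElem?_drop,
        revdrop_getElem? W m i hmn hi]
      have e : n - L + 1 - 1 + i = n - L + i := by omega
      rw [e]
      exact key i (by omega)
    · rw [List.getElem?_take, if_neg hi, List.getElem?_eq_none (by rw [hlenF]; omega)]
end
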